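/- Under the assumptions of the previous statement (D diagonal with positive real entries, x_{ℓ₁} a minimizer of the complex LASSO objective, u = 2 D^{−H} Aᴴ(y − A x_{ℓ₁})), for every m with x_{ℓ₁,m} ≠ 0 the phases agree: u_m / |u_m| = x_{ℓ₁,m} / |x_{ℓ₁,m}|, equivalently arg(u_m) = arg(x_{ℓ₁,m}). -/

import Mathlib

open ComplexConjugate

private lemma sq_abs_sub_mul (a b c : ℂ) :
    ‖a - b * c‖ ^ 2 =
      ‖a‖ ^ 2 - 2 * ((conj b * a) * conj c).re
        + ‖c‖ ^ 2 * ‖b‖ ^ 2 := by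
  simp only [Complex.sq_norm, Complex.normSq_apply, Complex.sub_re, Complex.sub_im,
    Complex.mul_re, Complex.mul_im, Complex.conj_re, Complex.conj_im]
  ring

private lemma sq_abs_add' (a c : ℂ) :
    ‖a + c‖ ^ 2 = ‖a‖ ^ 2 + 2 * (a * conj c).re + ‖c‖ ^ 2 := by
  simp only [Complex.sq_norm, Complex.normSq_apply, Complex.add_re, Complex.add_im,
    Complex.mul_re, Complex.mul_im, Complex.conj_re, Complex.conj_im]
  ring

set_option maxHeartbeats 2000000 in
/-- Under the LASSO optimality conditions, the phases of active primal coordinates and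
the corresponding dual coordinates agree: `u m / |u m| = x m / |x m|`. -/
theorem stmt_8 (N M : ℕ) (A : Matrix (Fin N) (Fin M) ℂ) (y : Fin N → ℂ)
    (d : Fin M → ℝ) (hd : ∀ m, 0 < d m) (μ : ℝ) (hμ : 0 < μ)
    (x : Fin M → ℂ)
    (hmin : ∀ x' : Fin M → ℂ,
      (∑ n, ‖(y - A.mulVec x) n‖ ^ 2) + μ * ∑ m, d m * ‖x m‖ ≤
      (∑ n, ‖(y - A.mulVec x') n‖ ^ 2) + μ * ∑ m, d m * ‖x' m‖)
    (u : Fin M → ℂ)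
    (hu : ∀ m, u m = (2 / (d m : ℂ)) * A.conjTranspose.mulVec (y - A.mulVec x) m) :
    ∀ m, x m ≠ 0 →
      u m / (‖u m‖ : ℂ) = x m / (‖x m‖ : ℂ) := by
  intro m hxm
  have hX : 0 < ‖x m‖ := norm_pos_iff.mpr hxm
  have hdm : 0 < d m := hd m
  have hw0 : u m - ((μ / ‖x m‖ : ℝ) : ℂ) * x m = 0 := by
    by_contra hne
    set X : ℝ := ‖x m‖ with hXdef
    set w : ℂ := u m - ((μ / X : ℝ) : ℂ) * x m with hwdef
    have hW : 0 < ‖w‖ ^ 2 := pow_pos (norm_pos_iff.mpr hne) 2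
    set W : ℝ := ‖w‖ ^ 2 with hWdef
    set C : ℝ := ∑ n, ‖A n m‖ ^ 2 with hCdef
    have hC0 : 0 ≤ C := Finset.sum_nonneg fun _ _ => sq_nonneg _
    set K : ℝ := W * (C + μ * d m / (2 * X)) with hKdef
    have hK0 : 0 < K := by
      have h1 : 0 < μ * d m / (2 * X) := div_pos (mul_pos hμ hdm) (by linarith)
      exact mul_pos hW (by linarith)
    set t : ℝ := d m * W / (2 * K) with htdef
    have ht0 : 0 < t := div_pos (mul_pos hdm hW) (by linarith)
    set c : ℂ := (t : ℂ) * w with hcdef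
    set x' : Fin M → ℂ := fun k => if k = m then x k + c else x k with hx'def
    set a : ℝ := (u m * conj w).re with hadef
    set b : ℝ := (x m * conj w).re with hbdef
    -- residual identity
    have hres : ∀ n, (y - A.mulVec x') n = (y - A.mulVec x) n - A n m * c := by
      intro n
      have h1 : A.mulVec x' n = A.mulVec x n + A n m * c := by
        simp only [Matrix.mulVec, dotProduct, hx'def]
        rw [Finset.sum_congr rfl (fun k _ => show A n k * (if k = m then x k + c else x k)
          = A n k * x k + (if k = m then A n m * c else 0) by split <;> simp_all <;> ring)]
        rw [Finset.sum_add_distrib, Finset.sum_ite_eq' Finset.univ m (fun _ => A n m * c)]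
        simp
      simp only [Pi.sub_apply, h1]
      ring
    -- dual relation
    have hS : (∑ n, conj (A n m) * (y - A.mulVec x) n) = ((d m / 2 : ℝ) : ℂ) * u m := by
      have hS0 : A.conjTranspose.mulVec (y - A.mulVec x) m
          = ∑ n, conj (A n m) * (y - A.mulVec x) n := by
        simp [Matrix.mulVec, dotProduct, Matrix.conjTranspose_apply]
      have hdm' : (d m : ℂ) ≠ 0 := by exact_mod_cast hdm.ne'
      rw [← hS0, hu m]
      push_cast
      field_simp
    -- |c|^2
    have habsc : ‖c‖ ^ 2 = t ^ 2 * W := by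
      rw [hcdef, norm_mul, Complex.norm_real, Real.norm_eq_abs, abs_of_pos ht0, mul_pow, hWdef]
    -- norm sum identity
    have h1 : ∑ n, ‖(y - A.mulVec x') n‖ ^ 2
        = (∑ n, ‖(y - A.mulVec x) n‖ ^ 2) - d m * t * a + t ^ 2 * W * C := by
      have step1 : ∀ n, ‖(y - A.mulVec x') n‖ ^ 2
          = ‖(y - A.mulVec x) n‖ ^ 2
            - 2 * ((conj (A n m) * (y - A.mulVec x) n) * conj c).re
            + t ^ 2 * W * ‖A n m‖ ^ 2 := by
        intro n
        rw [hres n, sq_abs_sub_mul, habsc]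
      rw [Finset.sum_congr rfl fun n _ => step1 n]
      rw [Finset.sum_add_distrib, Finset.sum_sub_distrib, ← Finset.mul_sum, ← Finset.mul_sum,
        ← Complex.re_sum, ← Finset.sum_mul, hS]
      have : ((((d m / 2 : ℝ) : ℂ) * u m) * conj c).re = d m * t * a / 2 := by
        rw [hcdef]
        simp only [map_mul, Complex.conj_ofReal]
        rw [hadef]
        have : ((d m / 2 : ℝ) : ℂ) * u m * ((t : ℂ) * conj w)
            = ((d m / 2 * t : ℝ) : ℂ) * (u m * conj w) := by push_cast; ring
        rw [this, Complex.re_ofReal_mul]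
        ring
      rw [this, hCdef]
      ring
    -- penalty identity
    have hpen : ∑ k, d k * ‖x' k‖
        = (∑ k, d k * ‖x k‖) + d m * (‖x m + c‖ - X) := by
      have step : ∀ k, d k * ‖x' k‖
          = d k * ‖x k‖
            + (if k = m then d m * (‖x m + c‖ - X) else 0) := by
        intro k
        by_cases h : k = m
        · subst h; simp [hx'def]; ring
        · simp [hx'def, h]
      rw [Finset.sum_congr rfl fun k _ => step k, Finset.sum_add_distrib,
        Finset.sum_ite_eq' Finset.univ m (fun _ => d m * (‖x m + c‖ - X))]
      simp
    -- key inequality from minimality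
    have key := hmin x'
    rw [h1, hpen] at key
    have key0 : 0 ≤ - (d m * t * a) + t ^ 2 * W * C
        + μ * (d m * (‖x m + c‖ - X)) := by linarith
    -- bound on |x m + c|
    have hb2 : 2 * X * ‖x m + c‖ ≤ 2 * X ^ 2 + 2 * t * b + t ^ 2 * W := by
      have h3 := sq_abs_add' (x m) c
      have h4 : (x m * conj c).re = t * b := by
        rw [hcdef]
        simp only [map_mul, Complex.conj_ofReal]
        have : x m * ((t : ℂ) * conj w) = ((t : ℝ) : ℂ) * (x m * conj w) := by ring
        rw [this, Complex.re_ofReal_mul, hbdef]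
      nlinarith [sq_nonneg (X - ‖x m + c‖), h3, habsc]
    -- identity a = W + (μ/X) * b
    have hid : a = W + μ / X * b := by
      have h5 : u m * conj w - ((μ / X : ℝ) : ℂ) * (x m * conj w) = w * conj w := by
        rw [hwdef]; ring
      have h6 : (w * conj w).re = W := by
        rw [Complex.mul_conj, hWdef, Complex.sq_norm]; simp
      have h7 : (u m * conj w).re - μ / X * (x m * conj w).re = W := by
        have := congrArg Complex.re h5
        simpa [Complex.sub_re, Complex.re_ofReal_mul, h6] using this
      rw [hadef, hbdef]; linarith
    -- final contradiction
    have hXne : X ≠ 0 := hX.ne'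
    have main : 0 ≤ - (d m * t * a) + t ^ 2 * W * C
        + μ * d m * ((2 * t * b + t ^ 2 * W) / (2 * X)) := by
      have h8 : ‖x m + c‖ - X ≤ (2 * t * b + t ^ 2 * W) / (2 * X) := by
        rw [le_div_iff₀ (by linarith)]
        nlinarith [hb2]
      nlinarith [mul_pos hμ hdm, key0, h8]
    have expand : - (d m * t * a) + t ^ 2 * W * C
        + μ * d m * ((2 * t * b + t ^ 2 * W) / (2 * X))
        = - (t * d m * W) + t ^ 2 * K := by
      rw [hid, hKdef]
      field_simp
      ring
    rw [expand] at main
    have htK : t * K = d m * W / 2 := by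
      rw [htdef]; field_simp
    nlinarith [main, htK, mul_pos (mul_pos ht0 hdm) hW]
  -- conclude from w = 0
  have hum : u m = ((μ / ‖x m‖ : ℝ) : ℂ) * x m := by
    linear_combination hw0
  have habs : ‖u m‖ = μ := by
    rw [hum, norm_mul, Complex.norm_real, Real.norm_eq_abs, abs_of_pos (by positivity)]
    field_simp
  rw [habs, hum]
  have hμ' : (μ : ℂ) ≠ 0 := by exact_mod_cast hμ.ne'
  have hX' : ((‖x m‖ : ℝ) : ℂ) ≠ 0 := by exact_mod_cast hX.ne'
  push_cast
  field_simp
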